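/- (Concatenation preserves admissibility, symplectic case.) Let d₁, d₂ be standard domino tableaux with d = d₁ + d₂ defined. If both d₁ and d₂ satisfy condition (S) (for every i, the subtableau of boxes numbered ≤ i has an even number of rows of each odd length) and d₁ has an even number of columns, then d satisfies (S). -/
import Mathlib


/-- A standard domino tableau, encoded by its chain of subdiagrams:
`shape i r` is the length of row `r` (rows indexed from `0`) of the Young diagram formed
by the boxes with entry `≤ i`.  Equivalently: the boxes are numbered `0, 1, …, steps`,
the box `0` occurs at most once (only when the total size is odd), each `i ≥ 1` occupies
two adjacent boxes (a horizontal or vertical domino), and the entries are nondecreasing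
along rows and columns. -/
structure DominoTableau where
  /-- the largest entry, `⌊n/2⌋` for a tableau with `n` boxes -/
  steps : ℕ
  /-- `shape i r` = length of row `r` of the subtableau formed by the boxes numbered `≤ i` -/
  shape : ℕ → ℕ → ℕ
  /-- every subshape is a Young diagram: row lengths are weakly decreasing -/
  shape_antitone : ∀ i, Antitone (shape i)
  /-- the subshape of entries `≤ 0` consists of at most one box (the box numbered `0`) … -/
  shape_zero_le : shape 0 0 ≤ 1
  /-- … located in the first row -/
  shape_zero : ∀ r, 1 ≤ r → shape 0 r = 0
  /-- the chain of subshapes is stationary after the last entry -/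
  shape_stable : ∀ i, steps ≤ i → shape i = shape steps
  /-- at each step a domino (horizontal or vertical) is added -/
  domino : ∀ i < steps,
    (∃ r, shape (i + 1) r = shape i r + 2 ∧ ∀ r', r' ≠ r → shape (i + 1) r' = shape i r') ∨
    (∃ r, shape (i + 1) r = shape i r + 1 ∧ shape (i + 1) (r + 1) = shape i (r + 1) + 1 ∧
      shape (i + 1) r = shape (i + 1) (r + 1) ∧
      ∀ r', r' ≠ r → r' ≠ r + 1 → shape (i + 1) r' = shape i r')

/-- `d.nrows i ℓ` is the number of rows of length `ℓ` in the subtableau of `d` formed by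
the boxes numbered `≤ i`. -/
noncomputable def DominoTableau.nrows (d : DominoTableau) (i ℓ : ℕ) : ℕ :=
  Nat.card {r : ℕ // d.shape i r = ℓ}

/-- The number of columns of a domino tableau (= the length of its first row). -/
def DominoTableau.cols (d : DominoTableau) : ℕ :=
  d.shape d.steps 0

/-- Condition (O): for every `i` and every even length `ℓ`, the subtableau formed by the
boxes numbered `≤ i` has an even number of rows of length `ℓ`. -/
def DominoTableau.CondO (d : DominoTableau) : Prop :=
  ∀ i ℓ, 0 < ℓ → Even ℓ → Even (d.nrows i ℓ)

/-- Condition (S): for every `i` and every odd length `ℓ`, the subtableau formed by the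
boxes numbered `≤ i` has an even number of rows of length `ℓ`. -/
def DominoTableau.CondS (d : DominoTableau) : Prop :=
  ∀ i ℓ, Odd ℓ → Even (d.nrows i ℓ)

/-- `d.IsConcat d₁ d₂` says that `d` is the concatenation `d₁ + d₂`: `d₂` has even size
(no box numbered `0`), the last column of `d₁` is at least as long as the first column of
`d₂` (so that the concatenation is defined), and `d` is obtained by placing `d₂` to the
right of `d₁` with all entries of `d₂` shifted by `⌊n₁/2⌋ = d₁.steps`. -/
def DominoTableau.IsConcat (d d₁ d₂ : DominoTableau) : Prop :=
  (∀ r, d₂.shape 0 r = 0) ∧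
  Nat.card {r : ℕ // 1 ≤ d₂.shape d₂.steps r} ≤
    Nat.card {r : ℕ // d₁.shape d₁.steps r = d₁.cols} ∧
  d.steps = d₁.steps + d₂.steps ∧
  (∀ i r, d.shape i r = d₁.shape i r + d₂.shape (i - d₁.steps) r)

namespace DominoTableau

lemma shape_mono_succ (d : DominoTableau) (i r : ℕ) :
    d.shape i r ≤ d.shape (i + 1) r := by
  by_cases hi : i < d.steps
  · rcases d.domino i hi with ⟨r0, h1, h2⟩ | ⟨r0, h1, h2', _, h3⟩
    · by_cases hr : r = r0
      · subst hr; omega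
      · rw [h2 r hr]
    · by_cases hr : r = r0
      · subst hr; omega
      · by_cases hr' : r = r0 + 1
        · subst hr'; omega
        · rw [h3 r hr hr']
  · rw [d.shape_stable i (by omega), d.shape_stable (i + 1) (by omega)]

lemma shape_mono (d : DominoTableau) {i j : ℕ} (hij : i ≤ j) (r : ℕ) :
    d.shape i r ≤ d.shape j r :=
  monotone_nat_of_le_succ (fun k => d.shape_mono_succ k r) hij

lemma shape_le_steps (d : DominoTableau) (i r : ℕ) :
    d.shape i r ≤ d.shape d.steps r := by
  by_cases h : i ≤ d.steps
  · exact d.shape_mono h r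
  · rw [d.shape_stable i (by omega)]

lemma support_finite (d : DominoTableau) (i : ℕ) :
    {r : ℕ | 1 ≤ d.shape i r}.Finite := by
  induction i with
  | zero =>
    apply Set.Finite.subset (Set.finite_singleton 0)
    intro r hr
    simp only [Set.mem_singleton_iff]
    by_contra hne
    have := d.shape_zero r (by omega)
    simp only [Set.mem_setOf_eq] at hr
    omega
  | succ i ih =>
    by_cases hi : i < d.steps
    · rcases d.domino i hi with ⟨r0, h1, h2⟩ | ⟨r0, h1, h2', _, h3⟩
      · apply Set.Finite.subset (ih.union (Set.finite_singleton r0))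
        intro r hr
        by_cases hr0 : r = r0
        · exact Or.inr hr0
        · left
          simp only [Set.mem_setOf_eq] at hr ⊢
          rw [h2 r hr0] at hr; exact hr
      · apply Set.Finite.subset (ih.union ((Set.finite_singleton (r0 + 1)).insert r0))
        intro r hr
        by_cases hr0 : r = r0
        · exact Or.inr (Or.inl hr0)
        · by_cases hr1 : r = r0 + 1
          · exact Or.inr (Or.inr hr1)
          · left
            simp only [Set.mem_setOf_eq] at hr ⊢
            rw [h3 r hr0 hr1] at hr; exact hr
    · have heq : d.shape (i + 1) = d.shape i := by
        rw [d.shape_stable (i + 1) (by omega), d.shape_stable i (by omega)]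
      rw [heq]; exact ih

end DominoTableau

/-- Concatenation preserves admissibility, symplectic case: if `d = d₁ + d₂` with both
`d₁` and `d₂` satisfying (S) and `d₁` having an even number of columns, then `d`
satisfies (S). -/
theorem stmt13 (d d₁ d₂ : DominoTableau) (h : d.IsConcat d₁ d₂)
    (hS1 : d₁.CondS) (hS2 : d₂.CondS) (heven : Even d₁.cols) : d.CondS := by
  obtain ⟨h0, h2, hsteps, hshape⟩ := h
  intro i ℓ hodd
  set j := i - d₁.steps with hj
  -- a convenient reduction: if the `d₂`-part vanishes at level `j`, use `hS1`
  have hred : (∀ r, d₂.shape j r = 0) → Even (d.nrows i ℓ) := by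
    intro hz
    have : d.nrows i ℓ = d₁.nrows i ℓ :=
      Nat.card_congr (Equiv.subtypeEquivRight (fun r => by
        rw [hshape i r, ← hj, hz r, add_zero]))
    rw [this]; exact hS1 i ℓ hodd
  by_cases hile : d₁.steps ≤ i
  swap
  · -- `i < d₁.steps`: the `d₂`-part is empty
    have hj0 : j = 0 := by omega
    exact hred (fun r => by rw [hj0]; exact h0 r)
  -- now `d₁.steps ≤ i`
  have hst : ∀ r, d₁.shape i r = d₁.shape d₁.steps r := fun r => by
    rw [d₁.shape_stable i hile]
  have hle_cols : ∀ r, d₁.shape d₁.steps r ≤ d₁.cols := fun r =>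
    d₁.shape_antitone d₁.steps (Nat.zero_le r)
  have hd2le : ∀ r, d₂.shape j r ≤ d₂.shape d₂.steps r := fun r =>
    d₂.shape_le_steps j r
  have hfin2 : {s : ℕ | 1 ≤ d₂.shape d₂.steps s}.Finite := d₂.support_finite d₂.steps
  have hcard2 : Nat.card {r : ℕ // 1 ≤ d₂.shape d₂.steps r} =
      {s : ℕ | 1 ≤ d₂.shape d₂.steps s}.ncard := Nat.card_coe_set_eq _
  have hcard1 : Nat.card {r : ℕ // d₁.shape d₁.steps r = d₁.cols} =
      {s : ℕ | d₁.shape d₁.steps s = d₁.cols}.ncard := Nat.card_coe_set_eq _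
  by_cases hcols : d₁.cols = 0
  · -- `d₁` is empty, hence so is `d₂`
    have hinf : Nat.card {r : ℕ // d₁.shape d₁.steps r = d₁.cols} = 0 := by
      have : Function.Injective (fun n : ℕ =>
          (⟨n, by have := hle_cols n; omega⟩ : {r : ℕ // d₁.shape d₁.steps r = d₁.cols})) :=
        fun a b hab => by simpa using hab
      have := Infinite.of_injective _ this
      exact Nat.card_eq_zero_of_infinite
    have hz2 : ∀ r, d₂.shape d₂.steps r = 0 := by
      intro r
      by_contra hne
      have hmem : r ∈ {s : ℕ | 1 ≤ d₂.shape d₂.steps s} := by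
        simp only [Set.mem_setOf_eq]; omega
      have hpos : 0 < {s : ℕ | 1 ≤ d₂.shape d₂.steps s}.ncard :=
        (Set.ncard_pos hfin2).mpr ⟨r, hmem⟩
      omega
    exact hred (fun r => by have := hd2le r; have := hz2 r; omega)
  -- `d₁.cols ≥ 1`: rows meeting `d₂` are full in `d₁`
  have hfull : ∀ r, 1 ≤ d₂.shape d₂.steps r → d₁.shape d₁.steps r = d₁.cols := by
    intro r hr
    by_contra hne
    have hlt : d₁.shape d₁.steps r < d₁.cols := lt_of_le_of_ne (hle_cols r) hne
    have hsub1 : Set.Iic r ⊆ {s : ℕ | 1 ≤ d₂.shape d₂.steps s} := by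
      intro s hs
      simp only [Set.mem_Iic] at hs
      exact le_trans hr (d₂.shape_antitone d₂.steps hs)
    have hge : r + 1 ≤ {s : ℕ | 1 ≤ d₂.shape d₂.steps s}.ncard := by
      have h1 : (Set.Iic r).ncard = r + 1 := by
        rw [← Finset.coe_Iic, Set.ncard_coe_finset, Nat.card_Iic]
      rw [← h1]
      exact Set.ncard_le_ncard hsub1 hfin2
    have hsub2 : {s : ℕ | d₁.shape d₁.steps s = d₁.cols} ⊆ Set.Iio r := by
      intro s hs
      simp only [Set.mem_setOf_eq] at hs
      simp only [Set.mem_Iio]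
      by_contra hge'
      have : d₁.shape d₁.steps s ≤ d₁.shape d₁.steps r :=
        d₁.shape_antitone d₁.steps (by omega)
      omega
    have hle' : {s : ℕ | d₁.shape d₁.steps s = d₁.cols}.ncard ≤ r := by
      have h1 : (Set.Iio r).ncard = r := by
        rw [← Finset.coe_Iio, Set.ncard_coe_finset, Nat.card_Iio]
      rw [← h1]
      exact Set.ncard_le_ncard hsub2 (Set.finite_Iio r)
    omega
  have key : ∀ r, d₂.shape j r = 0 ∨
      (1 ≤ d₂.shape j r ∧ d₁.shape d₁.steps r = d₁.cols) := by
    intro r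
    by_cases h1 : 1 ≤ d₂.shape j r
    · exact Or.inr ⟨h1, hfull r (le_trans h1 (hd2le r))⟩
    · exact Or.inl (by omega)
  rcases lt_trichotomy ℓ d₁.cols with hlt | heq | hgt
  · -- `ℓ < cols`: rows of length `ℓ` in `d` are exactly those of `d₁`
    have : d.nrows i ℓ = d₁.nrows i ℓ :=
      Nat.card_congr (Equiv.subtypeEquivRight (fun r => by
        rw [hshape i r, ← hj]
        have hs := hst r
        have hc := hle_cols r
        rcases key r with hz | ⟨h1, hc'⟩ <;> omega))
    rw [this]; exact hS1 i ℓ hodd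
  · -- `ℓ = cols` is impossible by parity
    exact absurd (heq ▸ heven) (Nat.not_even_iff_odd.mpr hodd)
  · -- `ℓ > cols`: rows of length `ℓ` in `d` correspond to rows of length `ℓ - cols` in `d₂`
    have hodd' : Odd (ℓ - d₁.cols) := Nat.Odd.sub_even (le_of_lt hgt) hodd heven
    have : d.nrows i ℓ = d₂.nrows j (ℓ - d₁.cols) :=
      Nat.card_congr (Equiv.subtypeEquivRight (fun r => by
        rw [hshape i r, ← hj]
        have hs := hst r
        have hc := hle_cols r
        rcases key r with hz | ⟨h1, hc'⟩ <;> omega))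
    rw [this]; exact hS2 j (ℓ - d₁.cols) hodd'
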